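/- Let T : ℕ → ℕ be the shortcut Collatz map. For all k, m ∈ ℕ, all i ∈ ℕ with i < 2^k, and all r ∈ ℕ with r ≤ k, we have T^r(2^k·m + i) = 3^{p_r(i)}·2^{k−r}·m + T^r(i), where p_r(i) is the number of indices s with 0 ≤ s < r such that T^s(i) is odd. -/
import Mathlib


/-- The shortcut Collatz map: `T x = x / 2` if `x` is even, `(3 * x + 1) / 2` if `x` is odd. -/
def T : ℕ → ℕ := fun x => if x % 2 = 0 then x / 2 else (3 * x + 1) / 2

/-- `p r i` is the number of indices `s < r` such that `T^[s] i` is odd. -/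
def p (r i : ℕ) : ℕ := ((Finset.range r).filter (fun s => Odd (T^[s] i))).card

theorem collatz_class_formula_partial (k m i : ℕ) (hi : i < 2 ^ k) (r : ℕ) (hr : r ≤ k) :
    T^[r] (2 ^ k * m + i) = 3 ^ (p r i) * 2 ^ (k - r) * m + T^[r] i := by
  induction r with
  | zero => simp [p]
  | succ r ih =>
    have hrk : r < k := hr
    have ih' := ih hrk.le
    rw [Function.iterate_succ_apply', Function.iterate_succ_apply', ih']
    have h2 : 2 ^ (k - r) = 2 * 2 ^ (k - (r + 1)) := by
      rw [← pow_succ']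
      congr 1
      omega
    set j := T^[r] i with hj
    by_cases hodd : Odd j
    · have hp : p (r + 1) i = p r i + 1 := by
        unfold p
        rw [Finset.range_add_one, Finset.filter_insert, if_pos (by rwa [← hj]),
          Finset.card_insert_of_notMem (by simp)]
      obtain ⟨c, hc⟩ := hodd
      rw [hp, hc, h2, pow_succ]
      have e1 : 3 ^ p r i * (2 * 2 ^ (k - (r + 1))) * m
          = 2 * (3 ^ p r i * 2 ^ (k - (r + 1)) * m) := by ring
      have e2 : 3 ^ p r i * 3 * 2 ^ (k - (r + 1)) * m
          = 3 * (3 ^ p r i * 2 ^ (k - (r + 1)) * m) := by ring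
      rw [e1, e2]
      set B := 3 ^ p r i * 2 ^ (k - (r + 1)) * m with hB
      unfold T
      split <;> split <;> omega
    · have hp : p (r + 1) i = p r i := by
        unfold p
        rw [Finset.range_add_one, Finset.filter_insert, if_neg (by rwa [← hj])]
      obtain ⟨c, hc⟩ := Nat.not_odd_iff_even.mp hodd
      rw [hp, hc, h2]
      have e1 : 3 ^ p r i * (2 * 2 ^ (k - (r + 1))) * m
          = 2 * (3 ^ p r i * 2 ^ (k - (r + 1)) * m) := by ring
      rw [e1]
      set B := 3 ^ p r i * 2 ^ (k - (r + 1)) * m with hB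
      unfold T
      split <;> split <;> omega
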